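/- Let ξ, λ < ε_{Ω+1} and θ < Ω. If ξ < λ and ξ* < (λ[θ])*, then ξ < λ[θ]. -/

import Mathlib

open Ordinal Set

noncomputable section
open scoped Classical

/-- `Ω`, the first uncountable ordinal. -/
def OmegaO : Ordinal := (Cardinal.aleph 1).ord

/-- `ε_{Ω+1}`, the least `ε > Ω` with `ω ^ ε = ε`. -/
def epsOmega : Ordinal := nfp (fun a => Ordinal.omega0 ^ a) (OmegaO + 1)

lemma omega0_le_OmegaO : Ordinal.omega0 ≤ OmegaO := by
  rw [OmegaO, ← Cardinal.ord_aleph0]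
  exact Cardinal.ord_le_ord.2 (Cardinal.aleph0_le_aleph 1)

lemma one_lt_OmegaO : 1 < OmegaO :=
  lt_of_lt_of_le Ordinal.one_lt_omega0 omega0_le_OmegaO

lemma OmegaO_pos : 0 < OmegaO := lt_trans zero_lt_one one_lt_OmegaO

/-- `ξ*`, the maximal coefficient in the `Ω`-normal form of `ξ`. -/
def star (ξ : Ordinal) : Ordinal :=
  if h0 : ξ = 0 then 0
  else if hl : log OmegaO ξ < ξ then
    max (max (star (log OmegaO ξ)) (star (ξ % OmegaO ^ log OmegaO ξ)))
      (ξ / OmegaO ^ log OmegaO ξ)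
  else 0
termination_by ξ
decreasing_by
  · exact hl
  · exact mod_opow_log_lt_self _ h0

/-- The generalized fundamental sequence `ξ[θ]`. -/
def fs (ξ θ : Ordinal) : Ordinal :=
  if h0 : ξ ≤ 1 then 0
  else if hmod : ξ % OmegaO ^ log OmegaO ξ ≠ 0 then
    OmegaO ^ log OmegaO ξ * (ξ / OmegaO ^ log OmegaO ξ) + fs (ξ % OmegaO ^ log OmegaO ξ) θ
  else if Order.IsSuccLimit (ξ / OmegaO ^ log OmegaO ξ) then OmegaO ^ log OmegaO ξ * θ
  else if hβ : ξ / OmegaO ^ log OmegaO ξ = 1 then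
    (if hlog : Order.IsSuccLimit (log OmegaO ξ) then
       (if hll : log OmegaO ξ < ξ then OmegaO ^ fs (log OmegaO ξ) θ else 0)
     else OmegaO ^ Ordinal.pred (log OmegaO ξ) * θ)
  else
    OmegaO ^ log OmegaO ξ * Ordinal.pred (ξ / OmegaO ^ log OmegaO ξ) + fs (OmegaO ^ log OmegaO ξ) θ
termination_by ξ
decreasing_by
  · exact mod_opow_log_lt_self _ (by intro h; exact h0 (by simp [h]))
  · exact hll
  · -- `Ω ^ log Ω ξ < ξ`
    have hξ0 : ξ ≠ 0 := by intro h; exact h0 (by simp [h])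
    have hle : OmegaO ^ log OmegaO ξ ≤ ξ := opow_log_le_self _ hξ0
    have hpos : 0 < OmegaO ^ log OmegaO ξ :=
      opow_pos _ OmegaO_pos
    have hβ0 : 0 < ξ / OmegaO ^ log OmegaO ξ :=
      Ordinal.div_pos (by positivity) |>.2 hle
    have hβ1 : 1 < ξ / OmegaO ^ log OmegaO ξ :=
      lt_of_le_of_ne (by simpa using Order.add_one_le_of_lt hβ0) (Ne.symm hβ)
    calc OmegaO ^ log OmegaO ξ = OmegaO ^ log OmegaO ξ * 1 := (mul_one _).symm
      _ < OmegaO ^ log OmegaO ξ * (ξ / OmegaO ^ log OmegaO ξ) := by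
          exact mul_lt_mul_of_pos_left hβ1 hpos
      _ ≤ ξ := Ordinal.mul_div_le _ _

/-- The terminal part `τ(ξ)`. -/
def tau (ξ : Ordinal) : Ordinal :=
  if h0 : ξ = 0 then 0
  else if hmod : ξ % OmegaO ^ log OmegaO ξ ≠ 0 then tau (ξ % OmegaO ^ log OmegaO ξ)
  else if Order.IsSuccLimit (ξ / OmegaO ^ log OmegaO ξ) then ξ / OmegaO ^ log OmegaO ξ
  else if log OmegaO ξ = 0 then 1
  else if hlog : Order.IsSuccLimit (log OmegaO ξ) then
    (if hll : log OmegaO ξ < ξ then tau (log OmegaO ξ) else 0)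
  else OmegaO
termination_by ξ
decreasing_by
  · exact mod_opow_log_lt_self _ h0
  · exact hll

/-- The collapsing function `Θ_X`. -/
def ThetaF (X : Set Ordinal) (ξ : Ordinal) : Ordinal :=
  sInf {θ | θ ∈ X ∧ star ξ < θ ∧ ∀ ζ, ζ < ξ → star ζ < θ → ThetaF X ζ < θ}
termination_by ξ
decreasing_by exact by assumption

/-- `Ω_n`: the tower `Ω_0 = 1`, `Ω_{n+1} = Ω ^ Ω_n`. -/
def OmegaTow : ℕ → Ordinal
  | 0 => 1
  | n + 1 => OmegaO ^ OmegaTow n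

/-- `Θ_X(ε_{Ω+1}) = sup_n Θ_X(Ω_n)`. -/
def ThetaEps (X : Set Ordinal) : Ordinal := ⨆ n : ℕ, ThetaF X (OmegaTow n)

/-- `ε̂_{Ω+1}`. -/
def hatEps (X : Set Ordinal) : Set Ordinal :=
  {ξ | ξ < epsOmega ∧ star ξ < ThetaEps X}

/-- `X` is a club in `Ω`. -/
def IsClubBelowOmega (X : Set Ordinal) : Prop :=
  (∀ x ∈ X, x < OmegaO) ∧
  (∀ a, a < OmegaO → ∃ x ∈ X, a < x) ∧
  (∀ S : Set Ordinal, S ⊆ X → S.Nonempty → sSup S < OmegaO → sSup S ∈ X)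

/-- The set of limit points of `X` (below `Ω`). -/
def limitPtsOf (X : Set Ordinal) : Set Ordinal :=
  {x | 0 < x ∧ ∀ y, y < x → ∃ z ∈ X, y < z ∧ z < x}

/-- `FIX(X)`. -/
def FIXs (X : Set Ordinal) : Set Ordinal :=
  {ξ | ξ < epsOmega ∧ star (fs ξ 1) < star ξ ∧ star ξ = tau ξ ∧
    ∃ γ, ξ < γ ∧ γ < epsOmega ∧ star ξ = ThetaF X γ}

/-- `JUMP(X)`. -/
def JUMPs (X : Set Ordinal) : Set Ordinal :=
  {0} ∪ {ξ | ∃ ζ, ξ = ζ + 1} ∪ FIXs X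

/-- `Θ*`. -/
def ThetaStarF (X : Set Ordinal) (ξ : Ordinal) : Ordinal :=
  if ∃ ζ, ξ = ζ + 1 then ThetaF X (Ordinal.pred ξ)
  else if ξ ∈ FIXs X then tau ξ
  else 0

/-- `ξ̌`. -/
def checkF (X : Set Ordinal) (ξ : Ordinal) : Ordinal :=
  if 0 < ThetaStarF X ξ then OmegaO * (ξ / OmegaO) else ξ

/-- `ℙ`, the club of countable additively indecomposable ordinals. -/
def PP : Set Ordinal := {x | x < OmegaO ∧ ∃ a, x = Ordinal.omega0 ^ a}

/-- `1 + Ord`, the club of nonzero countable ordinals. -/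
def oneOrdS : Set Ordinal := {x | 0 < x ∧ x < OmegaO}

/-- `Θ^{(i)}(ξ)`. -/
def ThetaIter (X : Set Ordinal) (ξ : Ordinal) : ℕ → Ordinal
  | 0 => ThetaStarF X ξ
  | n + 1 => ThetaF X (fs (checkF X ξ) (ThetaIter X ξ n))

/-- A Buchholz system of fundamental sequences for `Θ_X`. -/
def IsBuchholz (X : Set Ordinal) (B : Ordinal → ℕ → Ordinal) : Prop :=
  (∀ n, B 0 n = 0) ∧
  (∀ α ξ n, ξ ∈ hatEps X → OmegaO ≤ ξ → tau ξ < OmegaO → ξ = fs α (tau ξ) →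
    B ξ n = fs α (B (tau ξ) n)) ∧
  (∀ ξ n, ξ ∈ hatEps X → 0 < tau (checkF X ξ) → tau (checkF X ξ) < OmegaO →
    B (ThetaF X ξ) n = ThetaF X (B (checkF X ξ) n + ThetaStarF X ξ)) ∧
  (∀ ξ n, ξ ∈ hatEps X → tau (checkF X ξ) = OmegaO →
    B (ThetaF X ξ) n = ThetaIter X ξ n)

/-- The additional clause for the `σ = Θ_{1+Ord}` Buchholz system. -/
def SigmaExtra (B : Ordinal → ℕ → Ordinal) : Prop :=
  ∀ β n, β < OmegaO → B (ThetaF oneOrdS β) n = β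

/-- The additional clauses for the `ϑ = Θ_ℙ` Buchholz system. -/
def VarthetaExtra (B : Ordinal → ℕ → Ordinal) : Prop :=
  (∀ α β n, 0 < β → (∀ α' < α, α' + β < α + β) → B (α + β) n = α + B β n) ∧
  (∀ β n, β < OmegaO → β ∈ JUMPs PP → B (ThetaF PP β) n = ThetaStarF PP β * n)


section Aux

lemma epsOmega_eq : Ordinal.omega0 ^ epsOmega = epsOmega := by
  unfold epsOmega
  exact Ordinal.nfp_fp (isNormal_opow one_lt_omega0) _

lemma OmegaO_lt_epsOmega : OmegaO < epsOmega := by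
  unfold epsOmega
  exact lt_of_lt_of_le (by rw [add_one_eq_succ]; exact Order.lt_succ _) (le_nfp _ _)

lemma epsOmega_pos : 0 < epsOmega := OmegaO_pos.trans OmegaO_lt_epsOmega

lemma one_lt_epsOmega : 1 < epsOmega := one_lt_OmegaO.trans OmegaO_lt_epsOmega

lemma add_lt_epsOmega {a b : Ordinal} (ha : a < epsOmega) (hb : b < epsOmega) :
    a + b < epsOmega := by
  rw [← epsOmega_eq] at ha hb ⊢
  exact principal_add_omega0_opow _ ha hb

lemma opow_lt_epsOmega {a : Ordinal} (ha : a < epsOmega) : OmegaO ^ a < epsOmega := by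
  have h2 : OmegaO * a < epsOmega := by
    have h : OmegaO * a ≤ Ordinal.omega0 ^ (OmegaO + a) := by
      rw [opow_add]
      exact mul_le_mul' (right_le_opow _ one_lt_omega0) (right_le_opow _ one_lt_omega0)
    refine h.trans_lt ?_
    conv_rhs => rw [← epsOmega_eq]
    exact (opow_lt_opow_iff_right one_lt_omega0).2 (add_lt_epsOmega OmegaO_lt_epsOmega ha)
  calc OmegaO ^ a ≤ (Ordinal.omega0 ^ OmegaO) ^ a :=
        opow_le_opow_left a (right_le_opow _ one_lt_omega0)
  _ = Ordinal.omega0 ^ (OmegaO * a) := (opow_mul _ _ _).symm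
  _ < Ordinal.omega0 ^ epsOmega := (opow_lt_opow_iff_right one_lt_omega0).2 h2
  _ = epsOmega := epsOmega_eq

lemma lt_opow_self_of_lt_epsOmega {a : Ordinal} (h : a < epsOmega) : a < OmegaO ^ a := by
  rcases lt_or_ge a (OmegaO ^ a) with h' | h'
  · exact h'
  exfalso
  have hea : OmegaO ^ a = a := h'.antisymm (right_le_opow a one_lt_OmegaO)
  have ha0 : a ≠ 0 := by rintro rfl; rw [opow_zero] at hea; exact one_ne_zero hea
  have h1a : (1 : Ordinal) ≤ a := Ordinal.one_le_iff_ne_zero.2 ha0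
  have hΩa : OmegaO ≤ a := by
    calc OmegaO = OmegaO ^ (1 : Ordinal) := (opow_one _).symm
    _ ≤ OmegaO ^ a := opow_le_opow_right OmegaO_pos h1a
    _ = a := hea
  have hne : a ≠ OmegaO := by
    rintro rfl
    have h3 : OmegaO < OmegaO * OmegaO := by
      conv_lhs => rw [← mul_one OmegaO]
      exact mul_lt_mul_of_pos_left one_lt_OmegaO OmegaO_pos
    have h4 : OmegaO * OmegaO ≤ OmegaO ^ OmegaO := by
      calc OmegaO * OmegaO = OmegaO ^ (1 + 1 : Ordinal) := by
            rw [opow_add, opow_one]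
      _ ≤ OmegaO ^ OmegaO := opow_le_opow_right OmegaO_pos
            (by rw [one_add_one_eq_two]
                refine le_trans ?_ omega0_le_OmegaO
                exact_mod_cast (Ordinal.nat_lt_omega0 2).le)
    rw [hea] at h4
    exact absurd (h3.trans_le h4) (lt_irrefl _)
  have hΩ1a : OmegaO + 1 ≤ a := by
    rw [add_one_eq_succ, Order.succ_le_iff]
    exact lt_of_le_of_ne hΩa (Ne.symm hne)
  have hfix : Ordinal.omega0 ^ a ≤ a := by
    calc Ordinal.omega0 ^ a ≤ OmegaO ^ a := opow_le_opow_left a omega0_le_OmegaO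
    _ = a := hea
  have : epsOmega ≤ a := by
    unfold epsOmega
    exact nfp_le_fp (isNormal_opow one_lt_omega0).monotone hΩ1a hfix
  exact absurd this (not_le.2 h)

lemma log_lt_self_of {ξ : Ordinal} (h0 : ξ ≠ 0) (h : ξ < epsOmega) : log OmegaO ξ < ξ :=
  (lt_opow_self_of_lt_epsOmega ((log_le_self OmegaO ξ).trans_lt h)).trans_le
    (opow_log_le_self OmegaO h0)

lemma star_zero' : star (0 : Ordinal) = 0 := by rw [star.eq_def]; simp

lemma star_eq {ξ : Ordinal} (h0 : ξ ≠ 0) (hl : log OmegaO ξ < ξ) :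
    star ξ = max (max (star (log OmegaO ξ)) (star (ξ % OmegaO ^ log OmegaO ξ)))
      (ξ / OmegaO ^ log OmegaO ξ) := by
  rw [star.eq_def, dif_neg h0, dif_pos hl]

lemma star_opow_mul_add {a v w : Ordinal} (ha : a < epsOmega) (hv0 : v ≠ 0) (hv : v < OmegaO)
    (hw : w < OmegaO ^ a) :
    star (OmegaO ^ a * v + w) = max (max (star a) (star w)) v := by
  have hne : OmegaO ^ a * v + w ≠ 0 := (opow_mul_add_pos OmegaO_pos.ne' a hv0 w).ne'
  have hlog : log OmegaO (OmegaO ^ a * v + w) = a := by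
    rw [log_opow_mul_add one_lt_OmegaO hv0 hw, log_eq_zero hv, add_zero]
  have hdiv : (OmegaO ^ a * v + w) / OmegaO ^ a = v := by
    rw [mul_add_div _ (opow_ne_zero _ OmegaO_pos.ne'), div_eq_zero_of_lt hw, add_zero]
  have hmod : (OmegaO ^ a * v + w) % OmegaO ^ a = w := by
    rw [mul_add_mod_self, mod_eq_of_lt hw]
  have hl : log OmegaO (OmegaO ^ a * v + w) < OmegaO ^ a * v + w := by
    rw [hlog]
    exact (lt_opow_self_of_lt_epsOmega ha).trans_le
      ((Ordinal.le_mul_left _ (pos_iff_ne_zero.2 hv0)).trans le_self_add)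
  rw [star_eq hne hl, hlog, hdiv, hmod]

end Aux

lemma fs_lt_epsOmega {θ : Ordinal} (hθ : θ < OmegaO) :
    ∀ ξ, ξ < epsOmega → fs ξ θ < epsOmega := by
  intro ξ
  induction ξ using Ordinal.induction with
  | _ ξ IH =>
  intro hξ
  rw [fs.eq_def]
  split_ifs with h0 hmod hlim hβ hlog hll
  · exact epsOmega_pos
  · have hξ0 : ξ ≠ 0 := fun h => h0 (by simp [h])
    exact add_lt_epsOmega ((mul_div_le ξ _).trans_lt hξ)
      (IH _ (mod_opow_log_lt_self _ hξ0) ((mod_opow_log_lt_self _ hξ0).trans hξ))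
  · have ha : log OmegaO ξ < epsOmega := (log_le_self _ _).trans_lt hξ
    calc OmegaO ^ log OmegaO ξ * θ < OmegaO ^ log OmegaO ξ * OmegaO :=
          mul_lt_mul_of_pos_left hθ (opow_pos _ OmegaO_pos)
    _ = OmegaO ^ (Order.succ (log OmegaO ξ)) := (opow_succ _ _).symm
    _ < epsOmega := opow_lt_epsOmega
          (by rw [← add_one_eq_succ]; exact add_lt_epsOmega ha one_lt_epsOmega)
  · exact opow_lt_epsOmega (IH _ hll ((log_le_self _ _).trans_lt hξ))
  · exact epsOmega_pos
  · have ha : Ordinal.pred (log OmegaO ξ) < epsOmega :=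
      ((Ordinal.pred_le_self _).trans (log_le_self _ _)).trans_lt hξ
    calc OmegaO ^ Ordinal.pred (log OmegaO ξ) * θ
        < OmegaO ^ Ordinal.pred (log OmegaO ξ) * OmegaO :=
          mul_lt_mul_of_pos_left hθ (opow_pos _ OmegaO_pos)
    _ = OmegaO ^ (Order.succ (Ordinal.pred (log OmegaO ξ))) := (opow_succ _ _).symm
    _ < epsOmega := opow_lt_epsOmega
          (by rw [← add_one_eq_succ]; exact add_lt_epsOmega ha one_lt_epsOmega)
  · have hξ0 : ξ ≠ 0 := fun h => h0 (by simp [h])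
    have hle : OmegaO ^ log OmegaO ξ ≤ ξ := opow_log_le_self _ hξ0
    have hpos : 0 < OmegaO ^ log OmegaO ξ := opow_pos _ OmegaO_pos
    have hβ0 : 0 < ξ / OmegaO ^ log OmegaO ξ := Ordinal.div_pos hpos.ne' |>.2 hle
    have hβ1 : 1 < ξ / OmegaO ^ log OmegaO ξ :=
      lt_of_le_of_ne (Ordinal.one_le_iff_ne_zero.2 hβ0.ne') (Ne.symm hβ)
    have hA : OmegaO ^ log OmegaO ξ < ξ := by
      calc OmegaO ^ log OmegaO ξ = OmegaO ^ log OmegaO ξ * 1 := (mul_one _).symm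
      _ < OmegaO ^ log OmegaO ξ * (ξ / OmegaO ^ log OmegaO ξ) :=
          mul_lt_mul_of_pos_left hβ1 hpos
      _ ≤ ξ := mul_div_le _ _
    exact add_lt_epsOmega
      ((le_trans (mul_le_mul_right (Ordinal.pred_le_self _) _) (mul_div_le _ _)).trans_lt hξ)
      (IH _ hA (hA.trans hξ))

lemma decomp_aux {A v ξ : Ordinal} (hA : A ≠ 0) (hge : A * v ≤ ξ) (hup : ξ < A * Order.succ v) :
    A * v + ξ % A = ξ := by
  have hdiv : ξ / A = v :=
    le_antisymm (Order.lt_succ_iff.1 ((Ordinal.div_lt hA).2 hup)) ((Ordinal.le_div hA).2 hge)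
  conv_rhs => rw [← Ordinal.div_add_mod ξ A]
  rw [hdiv]

lemma stmt1_aux {θ : Ordinal} (hθ : θ < OmegaO) :
    ∀ lam ξ, ξ < epsOmega → lam < epsOmega → ξ < lam → star ξ < star (fs lam θ) →
      ξ < fs lam θ := by
  intro lam
  induction lam using Ordinal.induction with
  | _ lam IH =>
  intro ξ hξ hlam h1 h2
  have hfs0 : fs lam θ ≠ 0 := by
    intro h
    rw [h, star_zero'] at h2
    exact absurd h2 (not_lt.2 zero_le)
  rcases eq_or_ne ξ 0 with rfl | hξ0
  · exact pos_iff_ne_zero.2 hfs0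
  by_cases hlam1 : lam ≤ 1
  · exact absurd (by rw [fs.eq_def, dif_pos hlam1]) hfs0
  push_neg at hlam1
  have hlamne : lam ≠ 0 := (zero_lt_one.trans hlam1).ne'
  have hApos : 0 < OmegaO ^ log OmegaO lam := opow_pos _ OmegaO_pos
  have hAne : OmegaO ^ log OmegaO lam ≠ 0 := hApos.ne'
  have haeps : log OmegaO lam < epsOmega := (log_le_self _ _).trans_lt hlam
  have hbpos : 0 < lam / OmegaO ^ log OmegaO lam := div_opow_log_pos _ hlamne
  have hbΩ : lam / OmegaO ^ log OmegaO lam < OmegaO := div_opow_log_lt _ one_lt_OmegaO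
  have hγlt : lam % OmegaO ^ log OmegaO lam < OmegaO ^ log OmegaO lam := mod_lt _ hAne
  by_cases hmod : lam % OmegaO ^ log OmegaO lam ≠ 0
  · -- CASE A : γ ≠ 0
    have hF : fs lam θ = OmegaO ^ log OmegaO lam * (lam / OmegaO ^ log OmegaO lam)
        + fs (lam % OmegaO ^ log OmegaO lam) θ := by
      rw [fs.eq_def, dif_neg (not_le.2 hlam1), dif_pos hmod]
    rcases lt_or_ge ξ (OmegaO ^ log OmegaO lam * (lam / OmegaO ^ log OmegaO lam)) with hlt | hge
    · rw [hF]; exact hlt.trans_le le_self_add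
    · have hup : ξ < OmegaO ^ log OmegaO lam * (lam / OmegaO ^ log OmegaO lam)
          + lam % OmegaO ^ log OmegaO lam := by
        rw [Ordinal.div_add_mod]; exact h1
      have hup2 : ξ < OmegaO ^ log OmegaO lam * Order.succ (lam / OmegaO ^ log OmegaO lam) := by
        rw [mul_succ]
        exact hup.trans_le (add_le_add_right hγlt.le _)
      have hξeq := decomp_aux hAne hge hup2
      have hmodξ : ξ % OmegaO ^ log OmegaO lam < lam % OmegaO ^ log OmegaO lam := by
        rw [← hξeq] at hup
        exact (add_lt_add_iff_left _).1 hup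
      rcases lt_or_ge (fs (lam % OmegaO ^ log OmegaO lam) θ) (OmegaO ^ log OmegaO lam) with hδ | hδ
      · have hstarξ : star ξ = max (max (star (log OmegaO lam))
            (star (ξ % OmegaO ^ log OmegaO lam))) (lam / OmegaO ^ log OmegaO lam) := by
          conv_lhs => rw [← hξeq]
          exact star_opow_mul_add haeps hbpos.ne' hbΩ (mod_lt _ hAne)
        have hstarF : star (fs lam θ) = max (max (star (log OmegaO lam))
            (star (fs (lam % OmegaO ^ log OmegaO lam) θ))) (lam / OmegaO ^ log OmegaO lam) := by
          rw [hF]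
          exact star_opow_mul_add haeps hbpos.ne' hbΩ hδ
        have hkey : star (ξ % OmegaO ^ log OmegaO lam)
            < star (fs (lam % OmegaO ^ log OmegaO lam) θ) := by
          by_contra hc
          push_neg at hc
          rw [hstarξ, hstarF] at h2
          exact absurd h2 (not_lt.2 (max_le_max (max_le_max le_rfl hc) le_rfl))
        have hrec := IH _ (mod_opow_log_lt_self _ hlamne) _
          ((mod_le _ _).trans_lt hξ) ((mod_opow_log_lt_self _ hlamne).trans hlam) hmodξ hkey
        rw [hF, ← hξeq]
        exact (add_lt_add_iff_left _).2 hrec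
      · rw [hF, ← hξeq]
        exact (add_lt_add_iff_left _).2 ((mod_lt _ hAne).trans_le hδ)
  · push_neg at hmod
    have hlam_eq : OmegaO ^ log OmegaO lam * (lam / OmegaO ^ log OmegaO lam) = lam := by
      conv_rhs => rw [← Ordinal.div_add_mod lam (OmegaO ^ log OmegaO lam)]
      rw [hmod, add_zero]
    by_cases hlim : Order.IsSuccLimit (lam / OmegaO ^ log OmegaO lam)
    · -- CASE B : γ = 0, β limit
      have hF : fs lam θ = OmegaO ^ log OmegaO lam * θ := by
        rw [fs.eq_def, dif_neg (not_le.2 hlam1), dif_neg (not_not_intro hmod), if_pos hlim]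
      have hθ0 : θ ≠ 0 := by
        rintro rfl
        rw [mul_zero] at hF
        exact hfs0 hF
      by_contra hcon
      push_neg at hcon
      rw [hF] at hcon
      have hξge : OmegaO ^ log OmegaO lam ≤ ξ :=
        (Ordinal.le_mul_left _ (pos_iff_ne_zero.2 hθ0)).trans hcon
      have hξup : ξ < OmegaO ^ Order.succ (log OmegaO lam) := by
        rw [opow_succ]
        calc ξ < lam := h1
        _ = _ * _ := hlam_eq.symm
        _ ≤ OmegaO ^ log OmegaO lam * OmegaO := mul_le_mul_right hbΩ.le _
      have hlogξ : log OmegaO ξ = log OmegaO lam :=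
        (log_eq_iff one_lt_OmegaO hξ0 _).2 ⟨hξge, hξup⟩
      have hθdiv : θ ≤ ξ / OmegaO ^ log OmegaO lam := (Ordinal.le_div hAne).2 hcon
      have hstarξ := star_eq hξ0 (log_lt_self_of hξ0 hξ)
      rw [hlogξ] at hstarξ
      have hstarF : star (fs lam θ) = max (max (star (log OmegaO lam)) (star (0 : Ordinal))) θ := by
        rw [hF, ← add_zero (OmegaO ^ log OmegaO lam * θ)]
        exact star_opow_mul_add haeps hθ0 hθ hApos
      rw [hstarξ, hstarF] at h2
      exact absurd h2 (not_lt.2 (max_le_max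
        (max_le_max le_rfl (by rw [star_zero']; exact zero_le)) hθdiv))
    · by_cases hβ : lam / OmegaO ^ log OmegaO lam = 1
      · have hlamA : lam = OmegaO ^ log OmegaO lam := by
          conv_lhs => rw [← hlam_eq, hβ, mul_one]
        have ha0 : log OmegaO lam ≠ 0 := by
          intro h
          rw [h, opow_zero] at hlamA
          exact absurd hlamA.le (not_le.2 hlam1)
        by_cases hlog : Order.IsSuccLimit (log OmegaO lam)
        · -- CASE C : lam = Ω^a, a limit
          have hll : log OmegaO lam < lam := log_lt_self_of hlamne hlam
          have hF : fs lam θ = OmegaO ^ fs (log OmegaO lam) θ := by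
            rw [fs.eq_def, dif_neg (not_le.2 hlam1), dif_neg (not_not_intro hmod), if_neg hlim,
              dif_pos hβ, dif_pos hlog, dif_pos hll]
          have hξltA : ξ < OmegaO ^ log OmegaO lam := by rw [← hlamA]; exact h1
          have hlogξlt : log OmegaO ξ < log OmegaO lam :=
            (opow_lt_opow_iff_right one_lt_OmegaO).1 ((opow_log_le_self OmegaO hξ0).trans_lt hξltA)
          have hx : fs (log OmegaO lam) θ < epsOmega := fs_lt_epsOmega hθ _ haeps
          have hstarF : star (fs lam θ)
              = max (max (star (fs (log OmegaO lam) θ)) (star (0 : Ordinal))) 1 := by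
            have hrw : OmegaO ^ fs (log OmegaO lam) θ
                = OmegaO ^ fs (log OmegaO lam) θ * 1 + 0 := by rw [mul_one, add_zero]
            rw [hF, hrw]
            exact star_opow_mul_add hx one_ne_zero one_lt_OmegaO (opow_pos _ OmegaO_pos)
          have hstarξ := star_eq hξ0 (log_lt_self_of hξ0 hξ)
          have h1le : 1 ≤ star ξ := by
            rw [hstarξ]
            exact (Ordinal.one_le_iff_ne_zero.2 (div_opow_log_pos _ hξ0).ne').trans (le_max_right _ _)
          have hlg : star (log OmegaO ξ) ≤ star ξ := by
            rw [hstarξ]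
            exact (le_max_left _ _).trans (le_max_left _ _)
          have hkey : star (log OmegaO ξ) < star (fs (log OmegaO lam) θ) := by
            by_contra hc
            push_neg at hc
            refine absurd h2 (not_lt.2 ?_)
            rw [hstarF]
            exact max_le (max_le (hc.trans hlg)
              (by rw [star_zero']; exact zero_le.trans hlg)) h1le
          have hrec := IH _ hll _ ((log_le_self _ _).trans_lt hξ) haeps hlogξlt hkey
          rw [hF]
          calc ξ < OmegaO ^ Order.succ (log OmegaO ξ) := lt_opow_succ_log_self one_lt_OmegaO ξ
          _ ≤ OmegaO ^ fs (log OmegaO lam) θ :=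
            opow_le_opow_right OmegaO_pos (Order.succ_le_of_lt hrec)
        · -- CASE D : lam = Ω^(p+1)
          rcases Ordinal.zero_or_succ_or_isSuccLimit (log OmegaO lam) with h | ⟨p, hp⟩ | h
          · exact absurd h ha0
          replace hp := hp.symm
          swap
          · exact absurd h hlog
          have hF : fs lam θ = OmegaO ^ Ordinal.pred (log OmegaO lam) * θ := by
            rw [fs.eq_def, dif_neg (not_le.2 hlam1), dif_neg (not_not_intro hmod), if_neg hlim,
              dif_pos hβ, dif_neg hlog]
          have hpred : Ordinal.pred (log OmegaO lam) = p := by rw [hp, Ordinal.pred_succ]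
          have hplt : p < log OmegaO lam := by rw [hp]; exact Order.lt_succ p
          have hpeps : p < epsOmega := hplt.trans haeps
          have hθ0 : θ ≠ 0 := by
            rintro rfl
            rw [mul_zero] at hF
            exact hfs0 hF
          by_contra hcon
          push_neg at hcon
          rw [hF, hpred] at hcon
          have hξge : OmegaO ^ p ≤ ξ := (Ordinal.le_mul_left _ (pos_iff_ne_zero.2 hθ0)).trans hcon
          have hξup : ξ < OmegaO ^ Order.succ p := by
            rw [← hp, ← hlamA]; exact h1
          have hlogξ : log OmegaO ξ = p := (log_eq_iff one_lt_OmegaO hξ0 _).2 ⟨hξge, hξup⟩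
          have hθdiv : θ ≤ ξ / OmegaO ^ p := (Ordinal.le_div (opow_pos p OmegaO_pos).ne').2 hcon
          have hstarξ := star_eq hξ0 (log_lt_self_of hξ0 hξ)
          rw [hlogξ] at hstarξ
          have hstarF : star (fs lam θ) = max (max (star p) (star (0 : Ordinal))) θ := by
            rw [hF, hpred, ← add_zero (OmegaO ^ p * θ)]
            exact star_opow_mul_add hpeps hθ0 hθ (opow_pos p OmegaO_pos)
          rw [hstarξ, hstarF] at h2
          exact absurd h2 (not_lt.2 (max_le_max
            (max_le_max le_rfl (by rw [star_zero']; exact zero_le)) hθdiv))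
      · -- CASE E : γ = 0, β = β' + 1 > 1
        have hF : fs lam θ = OmegaO ^ log OmegaO lam
            * Ordinal.pred (lam / OmegaO ^ log OmegaO lam)
            + fs (OmegaO ^ log OmegaO lam) θ := by
          rw [fs.eq_def, dif_neg (not_le.2 hlam1), dif_neg (not_not_intro hmod), if_neg hlim,
            dif_neg hβ]
        rcases Ordinal.zero_or_succ_or_isSuccLimit (lam / OmegaO ^ log OmegaO lam) with h | ⟨b', hb'⟩ | h
        · exact absurd h hbpos.ne'
        replace hb' := hb'.symm
        swap
        · exact absurd h hlim
        have hpred : Ordinal.pred (lam / OmegaO ^ log OmegaO lam) = b' := by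
          rw [hb', Ordinal.pred_succ]
        have hb'0 : b' ≠ 0 := by
          rintro rfl
          rw [hb', Ordinal.succ_zero] at hβ
          exact hβ rfl
        have hb'Ω : b' < OmegaO := by
          refine lt_trans ?_ hbΩ
          rw [hb']
          exact Order.lt_succ b'
        have hb1 : 1 < lam / OmegaO ^ log OmegaO lam :=
          lt_of_le_of_ne (Ordinal.one_le_iff_ne_zero.2 hbpos.ne') (Ne.symm hβ)
        have hAlt : OmegaO ^ log OmegaO lam < lam := by
          calc OmegaO ^ log OmegaO lam = OmegaO ^ log OmegaO lam * 1 := (mul_one _).symm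
          _ < OmegaO ^ log OmegaO lam * (lam / OmegaO ^ log OmegaO lam) :=
              mul_lt_mul_of_pos_left hb1 hApos
          _ ≤ lam := mul_div_le _ _
        rcases lt_or_ge ξ (OmegaO ^ log OmegaO lam * b') with hlt | hge
        · rw [hF, hpred]
          exact hlt.trans_le le_self_add
        · have hup2 : ξ < OmegaO ^ log OmegaO lam * Order.succ b' := by
            rw [← hb']
            calc ξ < lam := h1
            _ = _ := hlam_eq.symm
          have hξeq := decomp_aux hAne hge hup2
          rcases lt_or_ge (fs (OmegaO ^ log OmegaO lam) θ) (OmegaO ^ log OmegaO lam) with hδ | hδ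
          · have hstarξ : star ξ = max (max (star (log OmegaO lam))
                (star (ξ % OmegaO ^ log OmegaO lam))) b' := by
              conv_lhs => rw [← hξeq]
              exact star_opow_mul_add haeps hb'0 hb'Ω (mod_lt _ hAne)
            have hstarF : star (fs lam θ) = max (max (star (log OmegaO lam))
                (star (fs (OmegaO ^ log OmegaO lam) θ))) b' := by
              rw [hF, hpred]
              exact star_opow_mul_add haeps hb'0 hb'Ω hδ
            have hkey : star (ξ % OmegaO ^ log OmegaO lam)
                < star (fs (OmegaO ^ log OmegaO lam) θ) := by
              by_contra hc
              push_neg at hc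
              rw [hstarξ, hstarF] at h2
              exact absurd h2 (not_lt.2 (max_le_max (max_le_max le_rfl hc) le_rfl))
            have hrec := IH _ hAlt _ ((mod_le _ _).trans_lt hξ) (hAlt.trans hlam)
              (mod_lt _ hAne) hkey
            rw [hF, hpred, ← hξeq]
            exact (add_lt_add_iff_left _).2 hrec
          · rw [hF, hpred, ← hξeq]
            exact (add_lt_add_iff_left _).2 ((mod_lt _ hAne).trans_le hδ)

/-- If `ξ < λ` and `ξ* < (λ[θ])*` then `ξ < λ[θ]`. -/
theorem stmt1 (ξ lam θ : Ordinal) (hξ : ξ < epsOmega) (hlam : lam < epsOmega)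
    (hθ : θ < OmegaO) (h1 : ξ < lam) (h2 : star ξ < star (fs lam θ)) :
    ξ < fs lam θ := by
  exact stmt1_aux hθ lam ξ hξ hlam h1 h2

end
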